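/- Fix an integer n ≥ 4. The set of images π(P), as P ranges over the homogeneous degree-2 polynomials in R satisfying φ_σ(P) = P for all σ ∈ Sₙ, is exactly the set of polynomials of the form c·Σᵢ aᵢ² + 2d·Σ_{i<j} aᵢaⱼ with c, d ∈ ℤ. -/

import Mathlib

set_option synthInstance.maxHeartbeats 1000000
set_option maxHeartbeats 1000000

open MvPolynomial

/-- The signed permutation of the `2n` variables `aᵢ⁺ = (i, true)`, `aᵢ⁻ = (i, false)`
associated to `σ ∈ Sₙ`: it sends `aᵢ^ε` to `a_{σ(i)}^{ε·sgn σ}`. -/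
def signedVar {n : ℕ} (σ : Equiv.Perm (Fin n)) (p : Fin n × Bool) : Fin n × Bool :=
  (σ p.1, if Equiv.Perm.sign σ = 1 then p.2 else !p.2)

/-- The ring automorphism `φ_σ` of `R = ℤ[a₁⁺, a₁⁻, …, aₙ⁺, aₙ⁻]` induced by the signed
permutation action of `σ ∈ Sₙ` on the variables. -/
noncomputable def phi {n : ℕ} (σ : Equiv.Perm (Fin n)) :
    MvPolynomial (Fin n × Bool) ℤ →ₐ[ℤ] MvPolynomial (Fin n × Bool) ℤ :=
  MvPolynomial.rename (signedVar σ)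

/-- The `ℤ`-algebra homomorphism `π : R → S = ℤ[a₁, …, aₙ]` with `π(aᵢ⁺) = aᵢ` and
`π(aᵢ⁻) = −aᵢ`. -/
noncomputable def piMap {n : ℕ} :
    MvPolynomial (Fin n × Bool) ℤ →ₐ[ℤ] MvPolynomial (Fin n) ℤ :=
  aeval (fun p : Fin n × Bool => if p.2 then (X p.1 : MvPolynomial (Fin n) ℤ) else - X p.1)

namespace Stmt5Aux
open Finsupp

lemma degree_single {τ : Type*} (p : τ) (k : ℕ) : (Finsupp.single p k).degree = k := by
  classical
  rcases eq_or_ne k 0 with rfl | hk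
  · simp [Finsupp.degree]
  · rw [Finsupp.degree_apply, Finsupp.support_single_ne_zero _ hk, Finset.sum_singleton,
      Finsupp.single_eq_same]

lemma degree_add {τ : Type*} (a b : τ →₀ ℕ) : (a + b).degree = a.degree + b.degree := by
  simp only [Finsupp.degree_eq_weight_one, map_add]

lemma degree_pair {τ : Type*} (p q : τ) :
    (Finsupp.single p 1 + Finsupp.single q 1).degree = 2 := by
  rw [degree_add, degree_single, degree_single]

lemma classify {τ : Type*} {m : τ →₀ ℕ} (h : m.degree = 2) :
    ∃ p q : τ, m = Finsupp.single p 1 + Finsupp.single q 1 := by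
  classical
  have hne : m.support.Nonempty := by
    rcases Finset.eq_empty_or_nonempty m.support with h0 | h1
    · rw [Finsupp.support_eq_empty] at h0
      subst h0; simp [Finsupp.degree] at h
    · exact h1
  obtain ⟨p, hp⟩ := hne
  have hsum : m p + ∑ i ∈ m.support.erase p, m i = 2 := by
    rw [Finset.add_sum_erase _ _ hp]; exact h
  have hp1 : 1 ≤ m p := Nat.one_le_iff_ne_zero.2 (Finsupp.mem_support_iff.1 hp)
  by_cases h2 : m p = 2
  · refine ⟨p, p, ?_⟩
    rw [← Finsupp.single_add]
    have hrest : ∀ i ∈ m.support.erase p, m i = 0 := by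
      rw [← Finset.sum_eq_zero_iff]; omega
    ext x
    rcases eq_or_ne x p with rfl | hxp
    · rw [Finsupp.single_eq_same]; exact h2
    · rw [Finsupp.single_eq_of_ne' (Ne.symm hxp)]
      by_contra hx
      exact hx (hrest x (Finset.mem_erase.2 ⟨hxp, Finsupp.mem_support_iff.2 fun h0 => hx (by rw [h0])⟩))
  · have hmp : m p = 1 := by omega
    have hs1 : ∑ i ∈ m.support.erase p, m i = 1 := by omega
    have hne2 : (m.support.erase p).Nonempty := by
      rcases Finset.eq_empty_or_nonempty (m.support.erase p) with h0 | h1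
      · rw [h0] at hs1; simp at hs1
      · exact h1
    obtain ⟨q, hq⟩ := hne2
    have hqp : q ≠ p := (Finset.mem_erase.1 hq).1
    have hq1 : 1 ≤ m q := Nat.one_le_iff_ne_zero.2
      (Finsupp.mem_support_iff.1 (Finset.mem_erase.1 hq).2)
    have hsum2 : m q + ∑ i ∈ (m.support.erase p).erase q, m i = 1 := by
      rw [Finset.add_sum_erase _ _ hq]; exact hs1
    have hmq : m q = 1 := by omega
    have hrest : ∀ i ∈ (m.support.erase p).erase q, m i = 0 := by
      rw [← Finset.sum_eq_zero_iff]; omega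
    refine ⟨p, q, ?_⟩
    ext x
    rcases eq_or_ne x p with rfl | hxp
    · rw [Finsupp.add_apply, Finsupp.single_eq_same, Finsupp.single_eq_of_ne' hqp, hmp]
      omega
    rcases eq_or_ne x q with rfl | hxq
    · rw [Finsupp.add_apply, Finsupp.single_eq_same, Finsupp.single_eq_of_ne' (Ne.symm hxp), hmq]
    rw [Finsupp.add_apply, Finsupp.single_eq_of_ne' (Ne.symm hxp),
      Finsupp.single_eq_of_ne' (Ne.symm hxq)]
    by_contra hx
    exact hx (hrest x (Finset.mem_erase.2 ⟨hxq, Finset.mem_erase.2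
      ⟨hxp, Finsupp.mem_support_iff.2 fun h0 => hx (by rw [h0]; omega)⟩⟩))

lemma pair_eq {τ : Type*} {i j p q : τ} (hij : i ≠ j)
    (h : Finsupp.single i 1 + Finsupp.single j 1 = Finsupp.single p 1 + Finsupp.single q 1) :
    (i = p ∧ j = q) ∨ (i = q ∧ j = p) := by
  classical
  have hI : (Finsupp.single p 1 + Finsupp.single q 1 : τ →₀ ℕ) i = 1 := by
    rw [← h, Finsupp.add_apply, Finsupp.single_eq_same, Finsupp.single_eq_of_ne' (Ne.symm hij)]
    omega
  rcases eq_or_ne p i with rfl | hpi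
  · left
    have := add_left_cancel h
    exact ⟨rfl, (Finsupp.single_left_injective one_ne_zero this)⟩
  · have hqi : q = i := by
      by_contra hqi
      rw [Finsupp.add_apply, Finsupp.single_eq_of_ne' hpi, Finsupp.single_eq_of_ne' hqi] at hI
      simp at hI
    subst hqi
    right
    rw [add_comm (Finsupp.single p 1)] at h
    have := add_left_cancel h
    exact ⟨rfl, (Finsupp.single_left_injective one_ne_zero this)⟩

lemma pair_ne_sq {τ : Type*} {i j p : τ} (hij : i ≠ j) :
    Finsupp.single i 1 + Finsupp.single j 1 ≠ Finsupp.single p 2 := by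
  intro h
  rw [show (Finsupp.single p 2 : τ →₀ ℕ) = Finsupp.single p 1 + Finsupp.single p 1 from
    (Finsupp.single_add p 1 1)] at h
  rcases pair_eq hij h with ⟨rfl, rfl⟩ | ⟨rfl, rfl⟩ <;> exact hij rfl

lemma X_mul_X {τ : Type*} (p q : τ) :
    (X p : MvPolynomial τ ℤ) * X q = monomial (Finsupp.single p 1 + Finsupp.single q 1) 1 := by
  have hX : ∀ r : τ, (X r : MvPolynomial τ ℤ) = monomial (Finsupp.single r 1) 1 := fun r => by
    rw [← pow_one (X r), X_pow_eq_monomial]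
  rw [hX, hX, monomial_mul, mul_one]

lemma monomial_pair {τ : Type*} (p q : τ) (c : ℤ) :
    (monomial (Finsupp.single p 1 + Finsupp.single q 1) c : MvPolynomial τ ℤ)
      = c • (X p * X q) := by
  rw [X_mul_X, smul_monomial, smul_eq_mul, mul_one]

lemma aeval_neg_of_hom2 {τ : Type*} {Q : MvPolynomial τ ℤ} (h : Q.IsHomogeneous 2) :
    aeval (fun i : τ => -(X i : MvPolynomial τ ℤ)) Q = Q := by
  conv_rhs => rw [← Q.support_sum_monomial_coeff]
  conv_lhs => rw [← Q.support_sum_monomial_coeff]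
  rw [map_sum]
  apply Finset.sum_congr rfl
  intro m hm
  have hd : m.degree = 2 := by
    by_contra hd
    exact MvPolynomial.mem_support_iff.1 hm (h.coeff_eq_zero hd)
  obtain ⟨p, q, rfl⟩ := classify hd
  rw [monomial_pair, map_smul, map_mul, aeval_X, aeval_X, neg_mul_neg]

lemma sum_sq {ι R : Type*} [Fintype ι] [LinearOrder ι] [LocallyFiniteOrder ι] [LocallyFiniteOrderTop ι] [LocallyFiniteOrderBot ι] [CommRing R]
    (f : ι → R) :
    (∑ i, f i) ^ 2 = ∑ i, f i ^ 2 + 2 * ∑ i, ∑ j ∈ Finset.Ioi i, f i * f j := by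
  have h1 : ∑ i, ∑ j ∈ Finset.Ioi i, (f j * f i + f i * f j)
      = ∑ i, ∑ j ∈ ({i}ᶜ : Finset ι), f j * f i :=
    Finset.sum_sum_Ioi_add_eq_sum_sum_off_diag _
  have h2 : ∑ i, ∑ j ∈ Finset.Ioi i, (f j * f i + f i * f j)
      = 2 * ∑ i, ∑ j ∈ Finset.Ioi i, f i * f j := by
    rw [Finset.mul_sum]
    refine Finset.sum_congr rfl fun i _ => ?_
    rw [Finset.mul_sum]
    refine Finset.sum_congr rfl fun j _ => ?_
    rw [two_mul, mul_comm (f j)]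
  have h3 : ∀ i, ∑ j, f i * f j = f i ^ 2 + ∑ j ∈ ({i}ᶜ : Finset ι), f i * f j := fun i => by
    rw [← Finset.sum_compl_add_sum ({i} : Finset ι) (fun j => f i * f j),
      Finset.sum_singleton, add_comm, sq]
  calc (∑ i, f i)^2 = ∑ i, ∑ j, f i * f j := by rw [sq, Finset.sum_mul_sum]
  _ = ∑ i, (f i ^ 2 + ∑ j ∈ ({i}ᶜ : Finset ι), f i * f j) := Finset.sum_congr rfl fun i _ => h3 i
  _ = ∑ i, f i ^ 2 + ∑ i, ∑ j ∈ ({i}ᶜ : Finset ι), f i * f j := Finset.sum_add_distrib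
  _ = ∑ i, f i ^ 2 + 2 * ∑ i, ∑ j ∈ Finset.Ioi i, f i * f j := by
      rw [← h2, h1]
      congr 1
      exact Finset.sum_congr rfl fun i _ => Finset.sum_congr rfl fun j _ => mul_comm _ _

lemma signedVar_injective {n : ℕ} (σ : Equiv.Perm (Fin n)) :
    Function.Injective (signedVar σ) := by
  intro a b h
  simp only [signedVar, Prod.mk.injEq] at h
  obtain ⟨h1, h2⟩ := h
  refine Prod.ext (σ.injective h1) ?_
  split_ifs at h2
  · exact h2
  · cases ha : a.2 <;> cases hb : b.2 <;> simp_all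

lemma phi_P1 {n : ℕ} (σ : Equiv.Perm (Fin n)) :
    phi σ (∑ i : Fin n, X ((i, true) : Fin n × Bool) * X (i, false))
      = ∑ i : Fin n, X ((i, true) : Fin n × Bool) * X (i, false) := by
  rw [phi, map_sum]
  simp only [map_mul, rename_X]
  by_cases hs : Equiv.Perm.sign σ = 1
  · simp only [signedVar, hs, if_true, eq_self_iff_true]
    exact Fintype.sum_equiv σ (fun i => X ((σ i, true) : Fin n × Bool) * X (σ i, false))
      (fun i => X ((i, true) : Fin n × Bool) * X (i, false)) fun i => rfl
  · simp only [signedVar, if_neg hs, Bool.not_true, Bool.not_false]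
    exact Fintype.sum_equiv σ (fun i => X ((σ i, false) : Fin n × Bool) * X (σ i, true))
      (fun i => X ((i, true) : Fin n × Bool) * X (i, false)) fun i => mul_comm _ _

lemma phi_P3 {n : ℕ} (σ : Equiv.Perm (Fin n)) :
    phi σ ((∑ i : Fin n, X ((i, true) : Fin n × Bool)) * ∑ i : Fin n, X ((i, false) : Fin n × Bool))
      = (∑ i : Fin n, X ((i, true) : Fin n × Bool)) * ∑ i : Fin n, X ((i, false) : Fin n × Bool) := by
  rw [phi, map_mul, map_sum, map_sum]
  simp only [rename_X]
  by_cases hs : Equiv.Perm.sign σ = 1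
  · simp only [signedVar, hs, if_true, eq_self_iff_true]
    rw [Fintype.sum_equiv σ (fun i => X ((σ i, true) : Fin n × Bool)) (fun i => X (i, true))
        fun i => rfl,
      Fintype.sum_equiv σ (fun i => X ((σ i, false) : Fin n × Bool)) (fun i => X (i, false))
        fun i => rfl]
  · simp only [signedVar, if_neg hs, Bool.not_true, Bool.not_false]
    rw [Fintype.sum_equiv σ (fun i => X ((σ i, false) : Fin n × Bool)) (fun i => X (i, false))
        fun i => rfl,
      Fintype.sum_equiv σ (fun i => X ((σ i, true) : Fin n × Bool)) (fun i => X (i, true))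
        fun i => rfl, mul_comm]

lemma piMap_P1 {n : ℕ} :
    piMap (∑ i : Fin n, X ((i, true) : Fin n × Bool) * X (i, false))
      = -∑ i : Fin n, (X i : MvPolynomial (Fin n) ℤ) ^ 2 := by
  rw [piMap, map_sum, ← Finset.sum_neg_distrib]
  refine Finset.sum_congr rfl fun i _ => ?_
  rw [map_mul, aeval_X, aeval_X]
  simp [sq]

lemma piMap_P3 {n : ℕ} :
    piMap ((∑ i : Fin n, X ((i, true) : Fin n × Bool)) * ∑ i : Fin n, X ((i, false) : Fin n × Bool))
      = -((∑ i : Fin n, (X i : MvPolynomial (Fin n) ℤ)) ^ 2) := by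
  rw [piMap, map_mul, map_sum, map_sum]
  simp only [aeval_X, Bool.false_eq_true, if_true, if_false]
  rw [Finset.sum_neg_distrib, mul_neg, sq]

lemma piMap_pair {n : ℕ} (p q : Fin n × Bool) (c : ℤ) :
    piMap (monomial (Finsupp.single p 1 + Finsupp.single q 1) c)
      = monomial (Finsupp.single p.1 1 + Finsupp.single q.1 1)
          ((if p.2 then (1 : ℤ) else -1) * (if q.2 then (1 : ℤ) else -1) * c) := by
  rw [monomial_pair, monomial_pair, map_smul, map_mul, piMap, aeval_X, aeval_X]
  obtain ⟨i, b⟩ := p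
  obtain ⟨j, b'⟩ := q
  cases b <;> cases b' <;>
    simp [smul_smul, mul_comm, neg_mul, mul_neg, smul_neg, neg_smul]
lemma exists_perm_two {α : Type*} [DecidableEq α] {a b c d : α} (hab : a ≠ b) (hcd : c ≠ d) :
    ∃ σ : Equiv.Perm α, σ a = c ∧ σ b = d := by
  have hd' : (Equiv.swap a c).symm d ≠ a := by
    intro h
    apply hcd
    have : d = Equiv.swap a c a := by
      conv_lhs => rw [← Equiv.apply_symm_apply (Equiv.swap a c) d, h]
    rw [Equiv.swap_apply_left] at this
    exact this.symm
  refine ⟨(Equiv.swap b ((Equiv.swap a c).symm d)).trans (Equiv.swap a c), ?_, ?_⟩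
  · rw [Equiv.trans_apply, Equiv.swap_apply_of_ne_of_ne hab (Ne.symm hd'),
      Equiv.swap_apply_left]
  · rw [Equiv.trans_apply, Equiv.swap_apply_left, Equiv.apply_symm_apply]

lemma hom2_piMap {n : ℕ} {P : MvPolynomial (Fin n × Bool) ℤ} (hP2 : P.IsHomogeneous 2) :
    (piMap P).IsHomogeneous 2 := by
  rw [piMap]
  have hg : ∀ p : Fin n × Bool,
      ((if p.2 then (X p.1 : MvPolynomial (Fin n) ℤ) else -X p.1)).IsHomogeneous 1 := by
    rintro ⟨i, b⟩
    cases b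
    · simpa using (isHomogeneous_X ℤ i).neg
    · simpa using isHomogeneous_X ℤ i
  simpa using hP2.aeval _ hg

lemma sym_piMap {n : ℕ} {P : MvPolynomial (Fin n × Bool) ℤ} (hP2 : P.IsHomogeneous 2)
    (hinv : ∀ σ : Equiv.Perm (Fin n), phi σ P = P) (σ : Equiv.Perm (Fin n)) :
    rename (⇑σ) (piMap P) = piMap P := by
  have hQ2 : (piMap P).IsHomogeneous 2 := hom2_piMap hP2
  by_cases hs : Equiv.Perm.sign σ = 1
  · have h2 : piMap (phi σ P) = rename (⇑σ) (piMap P) := by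
      rw [phi, piMap, aeval_rename, ← AlgHom.comp_apply, comp_aeval]
      refine congrArg (fun g => (aeval g : MvPolynomial (Fin n × Bool) ℤ →ₐ[ℤ]
        MvPolynomial (Fin n) ℤ) P) ?_
      funext p
      obtain ⟨i, b⟩ := p
      cases b <;> simp [signedVar, hs, Function.comp, map_neg]
    rw [← h2, hinv σ]
  · have h2 : piMap (phi σ P)
        = aeval (fun i : Fin n => -(X i : MvPolynomial (Fin n) ℤ)) (rename (⇑σ) (piMap P)) := by
      rw [phi, piMap, aeval_rename, ← AlgHom.comp_apply, ← AlgHom.comp_apply, comp_aeval]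
      refine congrArg (fun g => (aeval g : MvPolynomial (Fin n × Bool) ℤ →ₐ[ℤ]
        MvPolynomial (Fin n) ℤ) P) ?_
      funext p
      obtain ⟨i, b⟩ := p
      cases b <;> simp [signedVar, hs, Function.comp, map_neg]
    have h3 := aeval_neg_of_hom2 (hQ2.rename_isHomogeneous (f := ⇑σ))
    rw [← h3, ← h2, hinv σ]

lemma parity {n : ℕ} {P : MvPolynomial (Fin n × Bool) ℤ} (hP2 : P.IsHomogeneous 2)
    (hinv : ∀ σ : Equiv.Perm (Fin n), phi σ P = P)
    {i0 i1 i2 i3 : Fin n} (h01 : i0 ≠ i1) (h20 : i2 ≠ i0) (h21 : i2 ≠ i1) (h30 : i3 ≠ i0)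
    (h31 : i3 ≠ i1) (h23 : i2 ≠ i3) :
    coeff (Finsupp.single i0 1 + Finsupp.single i1 1) (piMap P)
      = 2 * (coeff (Finsupp.single (i0, true) 1 + Finsupp.single (i1, true) 1) P
          - coeff (Finsupp.single (i0, true) 1 + Finsupp.single (i1, false) 1) P) := by
  classical
  set mk : Bool → Bool → ((Fin n × Bool) →₀ ℕ) :=
    fun b b' => Finsupp.single (i0, b) 1 + Finsupp.single (i1, b') 1 with hmk
  have hswap : ∀ b b', coeff (mk b b') P = coeff (mk (!b) (!b')) P := by
    intro b b'
    have hσ : Equiv.Perm.sign (Equiv.swap i2 i3) = -1 := Equiv.Perm.sign_swap h23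
    have hne : ¬ (Equiv.Perm.sign (Equiv.swap i2 i3) = 1) := by rw [hσ]; decide
    have hco := MvPolynomial.coeff_rename_mapDomain (signedVar (Equiv.swap i2 i3))
      (signedVar_injective _) P (mk b b')
    rw [show rename (signedVar (Equiv.swap i2 i3)) P = P from hinv _] at hco
    rw [← hco]
    congr 1
    rw [hmk]
    simp only [Finsupp.mapDomain_add, Finsupp.mapDomain_single]
    congr 2 <;>
      simp [signedVar, hne, h23, Equiv.swap_apply_of_ne_of_ne h20.symm h30.symm,
        Equiv.swap_apply_of_ne_of_ne h21.symm h31.symm]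
  have hmkinj : ∀ {b b' c c' : Bool}, mk b b' = mk c c' → b = c ∧ b' = c' := by
    intro b b' c c' h
    have hne : ((i0, b) : Fin n × Bool) ≠ (i1, b') := fun hh => h01 (congrArg Prod.fst hh)
    rcases pair_eq hne h with ⟨h1, h2⟩ | ⟨h1, h2⟩
    · exact ⟨congrArg Prod.snd h1, congrArg Prod.snd h2⟩
    · exact absurd (congrArg Prod.fst h1) h01
  have hdeg : ∀ m ∈ P.support, Finsupp.degree m = 2 := fun m hm => by
    by_contra hd
    exact MvPolynomial.mem_support_iff.1 hm (hP2.coeff_eq_zero hd)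
  set F : ((Fin n × Bool) →₀ ℕ) → ℤ :=
    fun m => coeff (Finsupp.single i0 1 + Finsupp.single i1 1)
      (piMap (monomial m (coeff m P))) with hF
  have hdecomp : coeff (Finsupp.single i0 1 + Finsupp.single i1 1) (piMap P)
      = ∑ m ∈ P.support, F m := by
    conv_lhs => rw [← P.support_sum_monomial_coeff]
    rw [map_sum, MvPolynomial.coeff_sum]
  set S4 : Finset ((Fin n × Bool) →₀ ℕ) :=
    {mk true true, mk true false, mk false true, mk false false} with hS4
  have hvanish : ∀ m ∈ P.support, m ∉ S4 → F m = 0 := by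
    intro m hm hm4
    obtain ⟨p, q, rfl⟩ := classify (hdeg m hm)
    show coeff (Finsupp.single i0 1 + Finsupp.single i1 1)
      (piMap (monomial (Finsupp.single p 1 + Finsupp.single q 1)
        (coeff (Finsupp.single p 1 + Finsupp.single q 1) P))) = 0
    rw [piMap_pair, coeff_monomial, if_neg]
    intro heq
    rcases eq_or_ne p.1 q.1 with h | h
    · rw [h, ← Finsupp.single_add] at heq
      exact pair_ne_sq h01 heq.symm
    · rcases pair_eq h heq with ⟨hp, hq⟩ | ⟨hp, hq⟩
      · apply hm4
        have hpp : p = (i0, p.2) := Prod.ext hp rfl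
        have hqq : q = (i1, q.2) := Prod.ext hq rfl
        rw [hS4, hmk, hpp, hqq]
        cases hb : p.2 <;> cases hb' : q.2 <;> simp
      · apply hm4
        have hpp : p = (i1, p.2) := Prod.ext hp rfl
        have hqq : q = (i0, q.2) := Prod.ext hq rfl
        rw [hS4, hmk, hpp, hqq, add_comm]
        cases hb : p.2 <;> cases hb' : q.2 <;> simp
  have hzero : ∀ m ∉ P.support, F m = 0 := by
    intro m hm
    rw [MvPolynomial.mem_support_iff, not_not] at hm
    rw [hF]
    simp only [hm, map_zero, MvPolynomial.coeff_zero]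
  have hsum : ∑ m ∈ P.support, F m = ∑ m ∈ S4, F m := by
    have e1 : ∑ m ∈ P.support, F m = ∑ m ∈ P.support ∪ S4, F m :=
      Finset.sum_subset Finset.subset_union_left (fun m _ hm => hzero m hm)
    have e2 : ∑ m ∈ S4, F m = ∑ m ∈ P.support ∪ S4, F m :=
      Finset.sum_subset Finset.subset_union_right (fun m hmem hm4 => by
        rcases Finset.mem_union.1 hmem with h | h
        · exact hvanish m h hm4
        · exact absurd h hm4)
    rw [e1, ← e2]
  have hS4sum : ∑ m ∈ S4, F m
      = F (mk true true) + F (mk true false) + F (mk false true) + F (mk false false) := by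
    rw [hS4]
    rw [Finset.sum_insert (by
        intro h
        simp only [Finset.mem_insert, Finset.mem_singleton] at h
        rcases h with h | h | h <;> simpa using hmkinj h),
      Finset.sum_insert (by
        intro h
        simp only [Finset.mem_insert, Finset.mem_singleton] at h
        rcases h with h | h <;> simpa using hmkinj h),
      Finset.sum_insert (by
        intro h
        simp only [Finset.mem_singleton] at h
        simpa using hmkinj h),
      Finset.sum_singleton]
    ring
  have hF4 : ∀ b b', F (mk b b')
      = ((if b then (1:ℤ) else -1) * (if b' then (1:ℤ) else -1)) * coeff (mk b b') P := by
    intro b b'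
    show coeff (Finsupp.single i0 1 + Finsupp.single i1 1)
      (piMap (monomial (Finsupp.single (i0, b) 1 + Finsupp.single (i1, b') 1)
        (coeff (mk b b') P))) = _
    rw [piMap_pair, coeff_monomial, if_pos rfl]
  have h1 := hswap true true
  have h2 := hswap true false
  simp only [Bool.not_true, Bool.not_false] at h1 h2
  rw [hdecomp, hsum, hS4sum, hF4, hF4, hF4, hF4, ← h1, ← h2]
  show _ = 2 * (coeff (mk true true) P - coeff (mk true false) P)
  norm_num
  ring


lemma cross_one {n : ℕ} {p q : Fin n} (hpq : p < q) :
    ∑ i : Fin n, ∑ j ∈ Finset.Ioi i,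
        (if Finsupp.single i 1 + Finsupp.single j 1
            = Finsupp.single p 1 + Finsupp.single q 1 then (1:ℤ) else 0) = 1 := by
  classical
  rw [Finset.sum_eq_single p]
  · rw [Finset.sum_eq_single q]
    · rw [if_pos rfl]
    · intro j hj hjq
      rw [if_neg]
      intro h
      rcases pair_eq (ne_of_lt (Finset.mem_Ioi.1 hj)) h with ⟨h1, h2⟩ | ⟨h1, h2⟩
      · exact hjq h2
      · exact hpq.ne h1
    · intro h; exact absurd (Finset.mem_Ioi.2 hpq) h
  · intro i _ hip
    refine Finset.sum_eq_zero fun j hj => ?_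
    rw [if_neg]
    intro h
    rcases pair_eq (ne_of_lt (Finset.mem_Ioi.1 hj)) h with ⟨h1, h2⟩ | ⟨h1, h2⟩
    · exact hip h1
    · have hij := Finset.mem_Ioi.1 hj
      rw [h1, h2] at hij
      exact absurd hij (not_lt.2 hpq.le)
  · intro h; exact absurd (Finset.mem_univ p) h

lemma hard {n : ℕ} {i0 i1 i2 i3 : Fin n} (h01 : i0 ≠ i1) (h20 : i2 ≠ i0) (h21 : i2 ≠ i1)
    (h30 : i3 ≠ i0) (h31 : i3 ≠ i1) (h23 : i2 ≠ i3)
    {P : MvPolynomial (Fin n × Bool) ℤ} (hP2 : P.IsHomogeneous 2)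
    (hinv : ∀ σ : Equiv.Perm (Fin n), phi σ P = P) :
    ∃ c d : ℤ, piMap P = c • (∑ i : Fin n, X i ^ 2)
      + (2 * d) • (∑ i : Fin n, ∑ j ∈ Finset.Ioi i, X i * X j) := by
  classical
  have hQ2 := hom2_piMap hP2
  have hsym := fun σ => sym_piMap hP2 hinv σ
  refine ⟨coeff (Finsupp.single i0 2) (piMap P),
    coeff (Finsupp.single (i0, true) 1 + Finsupp.single (i1, true) 1) P
      - coeff (Finsupp.single (i0, true) 1 + Finsupp.single (i1, false) 1) P, ?_⟩
  have hE := parity hP2 hinv h01 h20 h21 h30 h31 h23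
  have htr_sq : ∀ p : Fin n,
      coeff (Finsupp.single p 2) (piMap P) = coeff (Finsupp.single i0 2) (piMap P) := by
    intro p
    have hco := MvPolynomial.coeff_rename_mapDomain (⇑(Equiv.swap i0 p))
      (Equiv.injective _) (piMap P) (Finsupp.single i0 2)
    rw [hsym, Finsupp.mapDomain_single, Equiv.swap_apply_left] at hco
    exact hco
  have htr_pair : ∀ p q : Fin n, p ≠ q →
      coeff (Finsupp.single p 1 + Finsupp.single q 1) (piMap P)
        = coeff (Finsupp.single i0 1 + Finsupp.single i1 1) (piMap P) := by
    intro p q hpq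
    obtain ⟨σ, hσ0, hσ1⟩ := exists_perm_two h01 hpq
    have hco := MvPolynomial.coeff_rename_mapDomain (⇑σ) (Equiv.injective _) (piMap P)
      (Finsupp.single i0 1 + Finsupp.single i1 1)
    rw [hsym, Finsupp.mapDomain_add, Finsupp.mapDomain_single, Finsupp.mapDomain_single,
      hσ0, hσ1] at hco
    exact hco
  apply MvPolynomial.ext
  intro m
  rw [MvPolynomial.coeff_add, MvPolynomial.coeff_smul, MvPolynomial.coeff_smul]
  have hsq : coeff m (∑ i : Fin n, (X i : MvPolynomial (Fin n) ℤ) ^ 2)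
      = ∑ i : Fin n, if Finsupp.single i 2 = m then (1:ℤ) else 0 := by
    rw [MvPolynomial.coeff_sum]
    exact Finset.sum_congr rfl fun i _ => coeff_X_pow i m 2
  have hcr : coeff m (∑ i : Fin n, ∑ j ∈ Finset.Ioi i, (X i : MvPolynomial (Fin n) ℤ) * X j)
      = ∑ i : Fin n, ∑ j ∈ Finset.Ioi i,
          if Finsupp.single i 1 + Finsupp.single j 1 = m then (1:ℤ) else 0 := by
    rw [MvPolynomial.coeff_sum]
    refine Finset.sum_congr rfl fun i _ => ?_
    rw [MvPolynomial.coeff_sum]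
    refine Finset.sum_congr rfl fun j _ => ?_
    rw [X_mul_X, coeff_monomial]
  rw [hsq, hcr]
  by_cases hdm : m.degree = 2
  · obtain ⟨p, q, rfl⟩ := classify hdm
    rcases eq_or_ne p q with rfl | hpq
    · rw [show Finsupp.single p 1 + Finsupp.single p 1 = Finsupp.single p 2 from
        (Finsupp.single_add p 1 1).symm]
      rw [htr_sq p]
      have e1 : ∑ i : Fin n, (if Finsupp.single i 2 = Finsupp.single p 2 then (1:ℤ) else 0)
          = 1 := by
        rw [Finset.sum_eq_single p]
        · rw [if_pos rfl]
        · intro b _ hb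
          rw [if_neg]
          intro h
          exact hb (Finsupp.single_left_injective (by norm_num) h)
        · intro h; exact absurd (Finset.mem_univ p) h
      have e2 : ∑ i : Fin n, ∑ j ∈ Finset.Ioi i,
          (if Finsupp.single i 1 + Finsupp.single j 1 = Finsupp.single p 2 then (1:ℤ) else 0)
          = 0 := by
        refine Finset.sum_eq_zero fun i _ => Finset.sum_eq_zero fun j hj => ?_
        rw [if_neg]
        exact pair_ne_sq (ne_of_lt (Finset.mem_Ioi.1 hj))
      rw [e1, e2, smul_eq_mul, smul_eq_mul]
      ring
    · rw [htr_pair p q hpq, hE]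
      have e1 : ∑ i : Fin n,
          (if Finsupp.single i 2 = Finsupp.single p 1 + Finsupp.single q 1 then (1:ℤ) else 0)
          = 0 := Finset.sum_eq_zero fun i _ => by
        rw [if_neg]
        intro h
        exact pair_ne_sq hpq h.symm
      have e2 : ∑ i : Fin n, ∑ j ∈ Finset.Ioi i,
          (if Finsupp.single i 1 + Finsupp.single j 1
              = Finsupp.single p 1 + Finsupp.single q 1 then (1:ℤ) else 0) = 1 := by
        rcases lt_or_gt_of_ne hpq with h | h
        · exact cross_one h
        · rw [add_comm (Finsupp.single p 1)]
          exact cross_one h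
      rw [e1, e2, smul_eq_mul, smul_eq_mul]
      ring
  · rw [hQ2.coeff_eq_zero hdm]
    have e1 : ∑ i : Fin n, (if Finsupp.single i 2 = m then (1:ℤ) else 0) = 0 :=
      Finset.sum_eq_zero fun i _ => by
        rw [if_neg]
        intro h
        apply hdm
        rw [← h, degree_single]
    have e2 : ∑ i : Fin n, ∑ j ∈ Finset.Ioi i,
        (if Finsupp.single i 1 + Finsupp.single j 1 = m then (1:ℤ) else 0) = 0 := by
      refine Finset.sum_eq_zero fun i _ => Finset.sum_eq_zero fun j _ => ?_
      rw [if_neg]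
      intro h
      apply hdm
      rw [← h, degree_pair]
    rw [e1, e2, smul_eq_mul, smul_eq_mul]
    ring

end Stmt5Aux

/-- Fix `n ≥ 4`.  The set of images `π(P)`, as `P` ranges over the
homogeneous degree-2 polynomials of `R` satisfying `φ_σ(P) = P` for all `σ ∈ Sₙ`, is
exactly the set of polynomials of the form `c·Σᵢ aᵢ² + 2d·Σ_{i<j} aᵢaⱼ` with
`c, d ∈ ℤ`. -/
theorem stmt5 (n : ℕ) (hn : 4 ≤ n) :
    {Q : MvPolynomial (Fin n) ℤ |
        ∃ P : MvPolynomial (Fin n × Bool) ℤ, P.IsHomogeneous 2 ∧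
          (∀ σ : Equiv.Perm (Fin n), phi σ P = P) ∧ piMap P = Q} =
      {Q : MvPolynomial (Fin n) ℤ |
        ∃ c d : ℤ,
          Q = c • (∑ i : Fin n, X i ^ 2)
            + (2 * d) • (∑ i : Fin n, ∑ j ∈ Finset.Ioi i, X i * X j)} := by
  classical
  ext Q
  simp only [Set.mem_setOf_eq]
  constructor
  · rintro ⟨P, hP2, hinv, rfl⟩
    exact Stmt5Aux.hard (i0 := ⟨0, by omega⟩) (i1 := ⟨1, by omega⟩)
      (i2 := ⟨2, by omega⟩) (i3 := ⟨3, by omega⟩)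
      (by simp [Fin.ext_iff]) (by simp [Fin.ext_iff]) (by simp [Fin.ext_iff])
      (by simp [Fin.ext_iff]) (by simp [Fin.ext_iff]) (by simp [Fin.ext_iff]) hP2 hinv
  · rintro ⟨c, d, rfl⟩
    refine ⟨(d - c) • (∑ i : Fin n, X ((i, true) : Fin n × Bool) * X (i, false))
        + (-d) • ((∑ i : Fin n, X ((i, true) : Fin n × Bool))
            * ∑ i : Fin n, X ((i, false) : Fin n × Bool)), ?_, ?_, ?_⟩
    · have h1 : MvPolynomial.IsHomogeneous
          (∑ i : Fin n, (X ((i, true) : Fin n × Bool) : MvPolynomial (Fin n × Bool) ℤ)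
            * X (i, false)) 2 :=
        IsHomogeneous.sum _ _ _ fun i _ => by
          simpa using (isHomogeneous_X ℤ ((i, true) : Fin n × Bool)).mul
            (isHomogeneous_X ℤ (i, false))
      have h3 : MvPolynomial.IsHomogeneous
          ((∑ i : Fin n, (X ((i, true) : Fin n × Bool) : MvPolynomial (Fin n × Bool) ℤ))
            * ∑ i : Fin n, X ((i, false) : Fin n × Bool)) 2 := by
        simpa using (IsHomogeneous.sum Finset.univ _ 1 fun i _ =>
            isHomogeneous_X ℤ ((i, true) : Fin n × Bool)).mul
          (IsHomogeneous.sum Finset.univ _ 1 fun i _ =>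
            isHomogeneous_X ℤ ((i, false) : Fin n × Bool))
      rw [← mem_homogeneousSubmodule] at h1 h3 ⊢
      exact Submodule.add_mem _ (Submodule.smul_mem _ _ h1) (Submodule.smul_mem _ _ h3)
    · intro σ
      rw [map_add, map_smul, map_smul, Stmt5Aux.phi_P1, Stmt5Aux.phi_P3]
    · rw [map_add, map_smul, map_smul, Stmt5Aux.piMap_P1, Stmt5Aux.piMap_P3,
        Stmt5Aux.sum_sq]
      simp only [zsmul_eq_mul]
      push_cast
      ring
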